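/- Let A be a finite nonempty set of positive integers and let τ be a nonempty consecutive pattern (a word over a partially ordered alphabet). Then in ℚ⟦x,y,t⟧: ( Σ_{n,m≥0} ( Σ_{σ∈C_{n;m}^A} t^{τ-nlap(σ)} ) x^n y^m ) · ( 1 − t·[ ( y·Σ_{a∈A} x^a − 1 )·C_τ^A(x,y) + 1 ] ) = C_τ^A(x,y). -/

import Mathlib

/-- A composition of `n` with `m` parts, all parts in `A`. -/
def IsCompOf (A : Finset ℕ) (n m : ℕ) (σ : List ℕ) : Prop :=
  (∀ x ∈ σ, x ∈ A) ∧ σ.sum = n ∧ σ.length = m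

/-- An occurrence, starting at position `i`, of the consecutive pattern
`p : Fin ℓ → α` (a word over a partially ordered alphabet `α`) in `σ`. -/
def OccAt {α : Type*} [PartialOrder α] {ℓ : ℕ} (p : Fin ℓ → α)
    (σ : List ℕ) (i : ℕ) : Prop :=
  i + ℓ ≤ σ.length ∧ ∀ s t : Fin ℓ,
    (p s < p t → σ.getD (i + s) 0 < σ.getD (i + t) 0) ∧
    (p s = p t → σ.getD (i + s) 0 = σ.getD (i + t) 0)

/-- `σ` avoids the consecutive pattern `p`. -/
def AvoidsPat {α : Type*} [PartialOrder α] {ℓ : ℕ} (p : Fin ℓ → α)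
    (σ : List ℕ) : Prop :=
  ∀ i : ℕ, ¬ OccAt p σ i

/-- `τ-nlap σ`: the maximum number of pairwise non-overlapping occurrences of the
consecutive pattern `p` in `σ` (occurrences overlap iff they share a position). -/
noncomputable def nlap {α : Type*} [PartialOrder α] {ℓ : ℕ} (p : Fin ℓ → α)
    (σ : List ℕ) : ℕ :=
  sSup {k : ℕ | ∃ S : Finset ℕ, S.card = k ∧ (∀ i ∈ S, OccAt p σ i) ∧
    ∀ i ∈ S, ∀ j ∈ S, i ≠ j → i + ℓ ≤ j ∨ j + ℓ ≤ i}

section Core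
variable {α : Type*} [PartialOrder α] {ℓ : ℕ} (p : Fin ℓ → α)

lemma occAt_take_iff (hℓ : 0 < ℓ) (σ : List ℕ) (j i : ℕ) :
    OccAt p (σ.take j) i ↔ OccAt p σ i ∧ i + ℓ ≤ j := by
  have hg : ∀ k : ℕ, k < j → (σ.take j).getD k 0 = σ.getD k 0 := fun k h => by
    simp [List.getD_eq_getElem?_getD, List.getElem?_take, h]
  constructor
  · rintro ⟨hlen, hc⟩
    rw [List.length_take, le_min_iff] at hlen
    refine ⟨⟨hlen.2, fun s t => ?_⟩, hlen.1⟩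
    have hs : (s : ℕ) < ℓ := s.2
    have ht : (t : ℕ) < ℓ := t.2
    rw [← hg _ (by omega), ← hg _ (by omega)]
    exact hc s t
  · rintro ⟨⟨hlen, hc⟩, hj⟩
    refine ⟨by rw [List.length_take]; omega, fun s t => ?_⟩
    have hs : (s : ℕ) < ℓ := s.2
    have ht : (t : ℕ) < ℓ := t.2
    rw [hg _ (by omega), hg _ (by omega)]
    exact hc s t

lemma occAt_drop_iff (σ : List ℕ) (j i : ℕ) (hj : j ≤ σ.length) :
    OccAt p (σ.drop j) i ↔ OccAt p σ (j + i) := by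
  have hg : ∀ k : ℕ, (σ.drop j).getD k 0 = σ.getD (j + k) 0 := fun k => by
    simp [List.getD_eq_getElem?_getD, List.getElem?_drop]
  unfold OccAt
  rw [List.length_drop]
  constructor
  · rintro ⟨hlen, hc⟩
    refine ⟨by omega, fun s t => ?_⟩
    have := hc s t
    rw [hg, hg] at this
    simp only [add_assoc]
    exact this
  · rintro ⟨hlen, hc⟩
    refine ⟨by omega, fun s t => ?_⟩
    rw [hg, hg]
    have := hc s t
    simp only [add_assoc] at this ⊢
    exact this

def NSet (σ : List ℕ) : Set ℕ :=
  {k : ℕ | ∃ S : Finset ℕ, S.card = k ∧ (∀ i ∈ S, OccAt p σ i) ∧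
    ∀ i ∈ S, ∀ j ∈ S, i ≠ j → i + ℓ ≤ j ∨ j + ℓ ≤ i}

lemma nlap_eq_sSup (σ : List ℕ) : nlap p σ = sSup (NSet p σ) := rfl

lemma zero_mem_NSet (σ : List ℕ) : 0 ∈ NSet p σ :=
  ⟨∅, by simp, by simp, by simp⟩

lemma NSet_le (hℓ : 0 < ℓ) (σ : List ℕ) {k : ℕ} (hk : k ∈ NSet p σ) : k ≤ σ.length := by
  obtain ⟨S, rfl, hocc, -⟩ := hk
  calc S.card ≤ (Finset.range σ.length).card := by
        apply Finset.card_le_card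
        intro i hi
        have := (hocc i hi).1
        simp only [Finset.mem_range]; omega
    _ = σ.length := Finset.card_range _

lemma bddAbove_NSet (hℓ : 0 < ℓ) (σ : List ℕ) : BddAbove (NSet p σ) :=
  ⟨σ.length, fun _ hk => NSet_le p hℓ σ hk⟩

lemma nlap_mem (hℓ : 0 < ℓ) (σ : List ℕ) : nlap p σ ∈ NSet p σ :=
  Nat.sSup_mem ⟨0, zero_mem_NSet p σ⟩ (bddAbove_NSet p hℓ σ)

lemma le_nlap (hℓ : 0 < ℓ) (σ : List ℕ) {k : ℕ} (hk : k ∈ NSet p σ) : k ≤ nlap p σ :=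
  le_csSup (bddAbove_NSet p hℓ σ) hk

lemma nlap_eq_zero_iff (hℓ : 0 < ℓ) (σ : List ℕ) :
    nlap p σ = 0 ↔ AvoidsPat p σ := by
  constructor
  · intro h i hocc
    have h1 : 1 ∈ NSet p σ := ⟨{i}, by simp, by simpa using hocc, by simp⟩
    have := le_nlap p hℓ σ h1
    omega
  · intro hav
    rw [nlap_eq_sSup]
    apply Nat.eq_zero_of_le_zero
    apply csSup_le ⟨0, zero_mem_NSet p σ⟩
    rintro k ⟨S, rfl, hocc, -⟩
    rcases S.eq_empty_or_nonempty with rfl | ⟨i, hi⟩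
    · simp
    · exact absurd (hocc i hi) (hav i)

lemma nlap_key (hℓ : 0 < ℓ) (σ : List ℕ) {J : ℕ} (hJ : OccAt p σ J)
    (hmax : ∀ i, OccAt p σ i → i ≤ J) :
    nlap p σ = nlap p (σ.take J) + 1 := by
  apply le_antisymm
  · -- nlap σ ≤ nlap take + 1
    obtain ⟨S, hcard, hocc, hno⟩ := nlap_mem p hℓ σ
    rcases S.eq_empty_or_nonempty with rfl | hne
    · simp at hcard; omega
    · set M := S.max' hne with hM
      have hMS : M ∈ S := S.max'_mem hne
      have hMJ : M ≤ J := hmax M (hocc M hMS)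
      have hmem : S.card - 1 ∈ NSet p (σ.take J) := by
        refine ⟨S.erase M, by rw [Finset.card_erase_of_mem hMS], fun i hi => ?_, ?_⟩
        · have hiS := Finset.mem_of_mem_erase hi
          have hiM : i ≠ M := Finset.ne_of_mem_erase hi
          have hle : i ≤ M := S.le_max' i hiS
          have := hno i hiS M hMS hiM
          rw [occAt_take_iff p hℓ]
          exact ⟨hocc i hiS, by omega⟩
        · intro i hi j hj hij
          exact hno i (Finset.mem_of_mem_erase hi) j (Finset.mem_of_mem_erase hj) hij
      have := le_nlap p hℓ _ hmem
      have hS1 : 1 ≤ S.card := Finset.card_pos.2 hne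
      omega
  · -- nlap take + 1 ≤ nlap σ
    obtain ⟨S, hcard, hocc, hno⟩ := nlap_mem p hℓ (σ.take J)
    have hJnot : J ∉ S := by
      intro hJS
      have := (occAt_take_iff p hℓ σ J J).1 (hocc J hJS)
      omega
    have hmem : nlap p (σ.take J) + 1 ∈ NSet p σ := by
      refine ⟨insert J S, by rw [Finset.card_insert_of_notMem hJnot, hcard], ?_, ?_⟩
      · intro i hi
        rcases Finset.mem_insert.1 hi with hiJ | hi'
        · exact hiJ ▸ hJ
        · exact ((occAt_take_iff p hℓ σ J i).1 (hocc i hi')).1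
      · intro i hi j hj hij
        rcases Finset.mem_insert.1 hi with hiJ | hi' <;>
          rcases Finset.mem_insert.1 hj with hjJ | hj'
        · exact absurd (hiJ.trans hjJ.symm) hij
        · have := ((occAt_take_iff p hℓ σ J j).1 (hocc j hj')).2
          omega
        · have := ((occAt_take_iff p hℓ σ J i).1 (hocc i hi')).2
          omega
        · exact hno i hi' j hj' hij
    exact le_nlap p hℓ σ hmem

end Core

section NcardHelpers
variable {β γ ι : Type*}

lemma my_ncard_biUnion (s : Finset ι) (f : ι → Set β) (hfin : ∀ i ∈ s, (f i).Finite)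
    (hdisj : ∀ i ∈ s, ∀ j ∈ s, i ≠ j → Disjoint (f i) (f j)) :
    (⋃ i ∈ s, f i).ncard = ∑ i ∈ s, (f i).ncard := by
  classical
  induction s using Finset.induction_on with
  | empty => simp
  | @insert a s ha ih =>
    rw [Finset.sum_insert ha]
    have hU : (⋃ i ∈ insert a s, f i) = f a ∪ ⋃ i ∈ s, f i := by simp
    have hfa : (f a).Finite := hfin a (Finset.mem_insert_self a s)
    have hfr : (⋃ i ∈ s, f i).Finite :=
      Set.Finite.biUnion s.finite_toSet (fun i hi => hfin i (Finset.mem_insert_of_mem hi))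
    have hd : Disjoint (f a) (⋃ i ∈ s, f i) := by
      rw [Set.disjoint_iUnion₂_right]
      intro i hi
      exact hdisj a (Finset.mem_insert_self a s) i (Finset.mem_insert_of_mem hi)
        (fun h => ha (h ▸ hi))
    rw [hU, Set.ncard_union_eq hd hfa hfr,
      ih (fun i hi => hfin i (Finset.mem_insert_of_mem hi))
        (fun i hi j hj hij => hdisj i (Finset.mem_insert_of_mem hi) j
          (Finset.mem_insert_of_mem hj) hij)]

lemma my_ncard_prod {s : Set β} {t : Set γ} (hs : s.Finite) (ht : t.Finite) :
    (s ×ˢ t).ncard = s.ncard * t.ncard := by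
  have h1 : (s ×ˢ t) = ↑(hs.toFinset ×ˢ ht.toFinset) := by ext x; simp
  rw [h1, Set.ncard_coe_finset, Finset.card_product,
    Set.ncard_eq_toFinset_card _ hs, Set.ncard_eq_toFinset_card _ ht]

end NcardHelpers

section Counting
variable {α : Type*} [PartialOrder α] {ℓ : ℕ} (p : Fin ℓ → α) (A : Finset ℕ)

lemma finite_comp (n m : ℕ) (Q : List ℕ → Prop) :
    {σ : List ℕ | IsCompOf A n m σ ∧ Q σ}.Finite := by
  have h1 : {l : List {x // x ∈ A} | l.length = m}.Finite := List.finite_length_eq _ _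
  apply Set.Finite.subset (h1.image (List.map Subtype.val))
  rintro σ ⟨⟨hmem, hsum, hlen⟩, -⟩
  refine ⟨σ.pmap Subtype.mk hmem, by simp [hlen], ?_⟩
  simp [List.map_pmap]

noncomputable def lastOcc (σ : List ℕ) : ℕ := sSup {i | OccAt p σ i}

lemma lastOcc_spec (hℓ : 0 < ℓ) (σ : List ℕ) (h : ∃ i, OccAt p σ i) :
    OccAt p σ (lastOcc p σ) ∧ ∀ i, OccAt p σ i → i ≤ lastOcc p σ := by
  have hbdd : BddAbove {i | OccAt p σ i} := ⟨σ.length, fun i hi => by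
    have := hi.1; simp only [Set.mem_setOf_eq] at *; omega⟩
  exact ⟨Nat.sSup_mem h hbdd, fun i hi => le_csSup hbdd hi⟩

lemma exists_occ_of_nlap_pos (hℓ : 0 < ℓ) (σ : List ℕ) (h : nlap p σ ≠ 0) :
    ∃ i, OccAt p σ i := by
  by_contra hno
  push_neg at hno
  exact h ((nlap_eq_zero_iff p hℓ σ).2 hno)

noncomputable def gN (n m r : ℕ) : ℕ := {σ : List ℕ | IsCompOf A n m σ ∧ nlap p σ = r}.ncard
noncomputable def cN (n m : ℕ) : ℕ := {σ : List ℕ | IsCompOf A n m σ ∧ AvoidsPat p σ}.ncard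
noncomputable def bN (n m : ℕ) : ℕ :=
  {σ : List ℕ | IsCompOf A n m σ ∧ OccAt p σ 0 ∧ AvoidsPat p (σ.drop 1)}.ncard

lemma avoids_nil (hℓ : 0 < ℓ) : AvoidsPat p ([] : List ℕ) := by
  intro i hocc
  have := hocc.1
  simp at this
  omega

lemma avoids_drop_one (hℓ : 0 < ℓ) (σ : List ℕ) (h : AvoidsPat p σ) :
    AvoidsPat p (σ.drop 1) := by
  rcases σ with _ | ⟨x, t⟩
  · exact avoids_nil p hℓ
  · intro i hocc
    rw [List.drop_one, List.tail_cons] at hocc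
    have : OccAt p (x :: t) (1 + i) := by
      rw [← occAt_drop_iff p (x :: t) 1 i (by simp)]
      simpa using hocc
    exact h _ this

lemma cN_m_zero (hℓ : 0 < ℓ) (n : ℕ) : cN p A n 0 = if n = 0 then 1 else 0 := by
  unfold cN
  split_ifs with hn
  · subst hn
    have : {σ : List ℕ | IsCompOf A 0 0 σ ∧ AvoidsPat p σ} = {([] : List ℕ)} := by
      ext σ
      simp only [Set.mem_setOf_eq, Set.mem_singleton_iff]
      constructor
      · rintro ⟨⟨-, -, hlen⟩, -⟩
        exact List.length_eq_zero_iff.1 hlen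
      · rintro rfl
        exact ⟨⟨by simp, by simp, by simp⟩, avoids_nil p hℓ⟩
    rw [this, Set.ncard_singleton]
  · have : {σ : List ℕ | IsCompOf A n 0 σ ∧ AvoidsPat p σ} = ∅ := by
      ext σ
      simp only [Set.mem_setOf_eq, Set.mem_empty_iff_false, iff_false]
      rintro ⟨⟨-, hsum, hlen⟩, -⟩
      rw [List.length_eq_zero_iff.1 hlen] at hsum
      simp at hsum
      exact hn hsum.symm
    rw [this, Set.ncard_empty]

lemma bN_m_zero (hℓ : 0 < ℓ) (n : ℕ) : bN p A n 0 = 0 := by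
  unfold bN
  convert Set.ncard_empty (List ℕ)
  ext σ
  simp only [Set.mem_setOf_eq, Set.mem_empty_iff_false, iff_false]
  rintro ⟨⟨-, -, hlen⟩, hocc, -⟩
  have := hocc.1
  omega

lemma block_count (hℓ : 0 < ℓ) (n m : ℕ) :
    bN p A n m + cN p A n m
      = (∑ a ∈ A, if a ≤ n ∧ 1 ≤ m then cN p A (n - a) (m - 1) else 0)
        + (if n = 0 ∧ m = 0 then 1 else 0) := by
  rcases m with _ | m'
  · rw [bN_m_zero p A hℓ, cN_m_zero p A hℓ]
    simp
  · -- m = m' + 1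
    have hsum0 : ∀ a ∈ A, (if a ≤ n ∧ 1 ≤ m' + 1 then cN p A (n - a) (m' + 1 - 1) else 0)
        = (if a ≤ n then cN p A (n - a) m' else 0) := by
      intro a _
      simp
    rw [Finset.sum_congr rfl hsum0]
    simp only [Nat.add_eq_zero, one_ne_zero, and_false, if_false, add_zero]
    -- T = blocks ∪ avoiders
    set T := {σ : List ℕ | IsCompOf A n (m' + 1) σ ∧ AvoidsPat p (σ.drop 1)} with hT
    have hTeq : T = {σ : List ℕ | IsCompOf A n (m' + 1) σ ∧ OccAt p σ 0 ∧ AvoidsPat p (σ.drop 1)}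
        ∪ {σ : List ℕ | IsCompOf A n (m' + 1) σ ∧ AvoidsPat p σ} := by
      ext σ
      simp only [Set.mem_setOf_eq, Set.mem_union]
      constructor
      · rintro ⟨hc, htail⟩
        by_cases hav : AvoidsPat p σ
        · exact Or.inr ⟨hc, hav⟩
        · left
          refine ⟨hc, ?_, htail⟩
          unfold AvoidsPat at hav
          push_neg at hav
          obtain ⟨i, hi⟩ := hav
          rcases i with _ | i'
          · exact hi
          · exfalso
            apply htail (i')
            rw [occAt_drop_iff p σ 1 i' (by rw [hc.2.2]; omega)]
            have : 1 + i' = i' + 1 := by omega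
            rw [this]
            exact hi
      · rintro (⟨hc, hocc, htail⟩ | ⟨hc, hav⟩)
        · exact ⟨hc, htail⟩
        · exact ⟨hc, avoids_drop_one p hℓ σ hav⟩
    have hdisj : Disjoint {σ : List ℕ | IsCompOf A n (m' + 1) σ ∧ OccAt p σ 0 ∧ AvoidsPat p (σ.drop 1)}
        {σ : List ℕ | IsCompOf A n (m' + 1) σ ∧ AvoidsPat p σ} := by
      rw [Set.disjoint_left]
      rintro σ ⟨-, hocc, -⟩ ⟨-, hav⟩
      exact hav 0 hocc
    have hcard : T.ncard = bN p A n (m' + 1) + cN p A n (m' + 1) := by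
      rw [hTeq]
      exact Set.ncard_union_eq hdisj (finite_comp A n (m' + 1) _) (finite_comp A n (m' + 1) _)
    -- T = ⋃ over heads
    have hTU : T = ⋃ a ∈ A, {σ : List ℕ | σ ∈ T ∧ σ.headI = a} := by
      ext σ
      simp only [Set.mem_iUnion, Set.mem_setOf_eq, exists_prop]
      constructor
      · intro hσ
        rcases σ with _ | ⟨x, t⟩
        · exact absurd hσ.1.2.2 (by simp)
        · exact ⟨x, hσ.1.1 x (by simp), hσ, rfl⟩
      · rintro ⟨a, -, hσ, -⟩
        exact hσ
    have hhead : ∀ a ∈ A, {σ : List ℕ | σ ∈ T ∧ σ.headI = a}.ncard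
        = if a ≤ n then cN p A (n - a) m' else 0 := by
      intro a _
      split_ifs with han
      · have himg : {σ : List ℕ | σ ∈ T ∧ σ.headI = a}
            = (fun ρ => a :: ρ) '' {ρ : List ℕ | IsCompOf A (n - a) m' ρ ∧ AvoidsPat p ρ} := by
          ext σ
          simp only [Set.mem_setOf_eq, Set.mem_image]
          constructor
          · rintro ⟨⟨⟨hmem, hsum, hlen⟩, htail⟩, hhd⟩
            rcases σ with _ | ⟨x, t⟩
            · simp at hlen
            · simp only [List.headI_cons] at hhd
              subst hhd
              refine ⟨t, ⟨⟨fun y hy => hmem y (by simp [hy]), ?_, by simpa using hlen⟩, ?_⟩, rfl⟩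
              · simp only [List.sum_cons] at hsum
                omega
              · simpa using htail
          · rintro ⟨ρ, ⟨⟨hmem, hsum, hlen⟩, hav⟩, rfl⟩
            refine ⟨⟨⟨?_, ?_, by simpa using hlen⟩, by simpa using hav⟩, rfl⟩
            · intro y hy
              rcases List.mem_cons.1 hy with rfl | hy'
              · assumption
              · exact hmem y hy'
            · simp only [List.sum_cons]
              omega
        rw [himg, Set.ncard_image_of_injective _ (fun x y h => by simpa using h)]
        rfl
      · convert Set.ncard_empty (List ℕ)
        ext σ
        simp only [Set.mem_setOf_eq, Set.mem_empty_iff_false, iff_false]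
        rintro ⟨⟨⟨hmem, hsum, hlen⟩, -⟩, hhd⟩
        rcases σ with _ | ⟨x, t⟩
        · simp at hlen
        · simp only [List.headI_cons] at hhd
          subst hhd
          simp only [List.sum_cons] at hsum
          omega
    have hfin : ∀ a ∈ A, {σ : List ℕ | σ ∈ T ∧ σ.headI = a}.Finite := by
      intro a _
      apply Set.Finite.subset (finite_comp A n (m' + 1) (fun σ => AvoidsPat p (σ.drop 1)))
      rintro σ ⟨hσ, -⟩
      exact hσ
    have hdisj2 : ∀ a ∈ A, ∀ b ∈ A, a ≠ b →
        Disjoint {σ : List ℕ | σ ∈ T ∧ σ.headI = a} {σ : List ℕ | σ ∈ T ∧ σ.headI = b} := by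
      intro a _ b _ hab
      rw [Set.disjoint_left]
      rintro σ ⟨-, ha⟩ ⟨-, hb⟩
      exact hab (ha ▸ hb ▸ rfl)
    rw [← hcard, hTU, my_ncard_biUnion A _ hfin hdisj2]
    exact Finset.sum_congr rfl hhead

end Counting

section Main
variable {α : Type*} [PartialOrder α] {ℓ : ℕ} (p : Fin ℓ → α) (A : Finset ℕ)

lemma gN_zero (hℓ : 0 < ℓ) (n m : ℕ) : gN p A n m 0 = cN p A n m := by
  unfold gN cN
  congr 1
  ext σ
  simp only [Set.mem_setOf_eq, and_congr_right_iff]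
  intro _
  exact nlap_eq_zero_iff p hℓ σ

lemma main_count (hℓ : 0 < ℓ) (n m r : ℕ) :
    gN p A n m (r + 1)
      = ∑ q ∈ Finset.HasAntidiagonal.antidiagonal n ×ˢ Finset.HasAntidiagonal.antidiagonal m,
          gN p A q.1.1 q.2.1 r * bN p A q.1.2 q.2.2 := by
  classical
  have key : ∀ σ : List ℕ, σ = (σ.take (lastOcc p σ)) ++ (σ.drop (lastOcc p σ)) :=
    fun σ => (List.take_append_drop _ _).symm
  have hbij : Set.BijOn (fun σ => (σ.take (lastOcc p σ), σ.drop (lastOcc p σ)))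
      {σ : List ℕ | IsCompOf A n m σ ∧ nlap p σ = r + 1}
      (⋃ q ∈ Finset.HasAntidiagonal.antidiagonal n ×ˢ Finset.HasAntidiagonal.antidiagonal m,
        ({ρ : List ℕ | IsCompOf A q.1.1 q.2.1 ρ ∧ nlap p ρ = r} ×ˢ
         {β : List ℕ | IsCompOf A q.1.2 q.2.2 β ∧ OccAt p β 0 ∧ AvoidsPat p (β.drop 1)})) := by
    refine ⟨?_, ?_, ?_⟩
    · -- MapsTo
      rintro σ ⟨⟨hmem, hsum, hlen⟩, hnlap⟩
      obtain ⟨hJ, hmax⟩ := lastOcc_spec p hℓ σ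
        (exists_occ_of_nlap_pos p hℓ σ (by omega))
      have hJle : lastOcc p σ ≤ σ.length := by have := hJ.1; omega
      show (σ.take (lastOcc p σ), σ.drop (lastOcc p σ)) ∈ _
      rw [Set.mem_iUnion₂]
      refine ⟨(((σ.take (lastOcc p σ)).sum, (σ.drop (lastOcc p σ)).sum),
        ((σ.take (lastOcc p σ)).length, (σ.drop (lastOcc p σ)).length)), ?_, ?_, ?_⟩
      · rw [Finset.mem_product, Finset.HasAntidiagonal.mem_antidiagonal, Finset.HasAntidiagonal.mem_antidiagonal]
        constructor
        · rw [← hsum]; exact List.sum_take_add_sum_drop σ _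
        · show (σ.take (lastOcc p σ)).length + (σ.drop (lastOcc p σ)).length = m
          rw [List.length_take, List.length_drop]
          omega
      · refine ⟨⟨fun x hx => hmem x ((List.take_sublist _ σ).subset hx), rfl, rfl⟩, ?_⟩
        show nlap p (σ.take (lastOcc p σ)) = r
        have := nlap_key p hℓ σ hJ hmax
        omega
      · refine ⟨⟨fun x hx => hmem x ((List.drop_sublist _ σ).subset hx), rfl, rfl⟩, ?_, ?_⟩
        · rw [occAt_drop_iff p σ _ 0 hJle]
          simpa using hJ
        · intro i hocc
          have hdroplen : 1 ≤ (σ.drop (lastOcc p σ)).length := by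
            rw [List.length_drop]
            have := hJ.1
            omega
          have h1 : OccAt p (σ.drop (lastOcc p σ)) (1 + i) :=
            (occAt_drop_iff p (σ.drop (lastOcc p σ)) 1 i hdroplen).1 hocc
          have h2 : OccAt p σ (lastOcc p σ + (1 + i)) :=
            (occAt_drop_iff p σ (lastOcc p σ) (1 + i) hJle).1 h1
          have := hmax _ h2
          omega
    · -- InjOn
      rintro σ1 - σ2 - heq
      rw [key σ1, key σ2,
        show σ1.take (lastOcc p σ1) = σ2.take (lastOcc p σ2) from congrArg Prod.fst heq,
        show σ1.drop (lastOcc p σ1) = σ2.drop (lastOcc p σ2) from congrArg Prod.snd heq]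
    · -- SurjOn
      rintro ⟨ρ, β⟩ hmem
      rw [Set.mem_iUnion₂] at hmem
      obtain ⟨q, hq, hρβ⟩ := hmem
      rw [Finset.mem_product, Finset.HasAntidiagonal.mem_antidiagonal, Finset.HasAntidiagonal.mem_antidiagonal] at hq
      rw [Set.mem_prod] at hρβ
      obtain ⟨hρ, hβ⟩ := hρβ
      simp only [Set.mem_setOf_eq] at hρ hβ
      obtain ⟨⟨hmemρ, hsumρ, hlenρ⟩, hnlapρ⟩ := hρ
      obtain ⟨⟨hmemβ, hsumβ, hlenβ⟩, hoccβ, havβ⟩ := hβ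
      have hβne : 0 < β.length := by have := hoccβ.1; omega
      have hlenσ : (ρ ++ β).length = ρ.length + β.length := by simp
      have htake : (ρ ++ β).take ρ.length = ρ := List.take_left
      have hdrop : (ρ ++ β).drop ρ.length = β := List.drop_left
      have hjle : ρ.length ≤ (ρ ++ β).length := by omega
      have hJocc : OccAt p (ρ ++ β) ρ.length := by
        have := (occAt_drop_iff p (ρ ++ β) ρ.length 0 hjle).1
          (by rw [hdrop]; simpa using hoccβ)
        simpa using this
      have hmax : ∀ i, OccAt p (ρ ++ β) i → i ≤ ρ.length := by
        intro i hi
        by_contra hgt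
        push_neg at hgt
        have h1 : OccAt p ((ρ ++ β).drop ρ.length) (i - ρ.length) := by
          rw [occAt_drop_iff p (ρ ++ β) ρ.length _ hjle]
          have heq : ρ.length + (i - ρ.length) = i := by omega
          rw [heq]; exact hi
        rw [hdrop] at h1
        have h2 : OccAt p (β.drop 1) (i - ρ.length - 1) := by
          rw [occAt_drop_iff p β 1 _ (by omega)]
          have heq : 1 + (i - ρ.length - 1) = i - ρ.length := by omega
          rw [heq]; exact h1
        exact havβ _ h2
      have hlast : lastOcc p (ρ ++ β) = ρ.length := by
        obtain ⟨hJ', hmax'⟩ := lastOcc_spec p hℓ (ρ ++ β) ⟨ρ.length, hJocc⟩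
        exact le_antisymm (hmax _ hJ') (hmax' _ hJocc)
      refine ⟨ρ ++ β, ⟨⟨?_, ?_, ?_⟩, ?_⟩, ?_⟩
      · intro x hx
        rcases List.mem_append.1 hx with h | h
        · exact hmemρ x h
        · exact hmemβ x h
      · rw [List.sum_append, hsumρ, hsumβ, hq.1]
      · rw [List.length_append, hlenρ, hlenβ, hq.2]
      · rw [nlap_key p hℓ (ρ ++ β) hJocc hmax, htake, hnlapρ]
      · show (_, _) = (ρ, β)
        rw [hlast, htake, hdrop]
  have hcardS : gN p A n m (r + 1)
      = (⋃ q ∈ Finset.HasAntidiagonal.antidiagonal n ×ˢ Finset.HasAntidiagonal.antidiagonal m,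
          ({ρ : List ℕ | IsCompOf A q.1.1 q.2.1 ρ ∧ nlap p ρ = r} ×ˢ
           {β : List ℕ | IsCompOf A q.1.2 q.2.2 β ∧ OccAt p β 0 ∧
             AvoidsPat p (β.drop 1)})).ncard := by
    unfold gN
    rw [← hbij.image_eq, Set.ncard_image_of_injOn hbij.injOn]
  rw [hcardS, my_ncard_biUnion]
  · apply Finset.sum_congr rfl
    intro q hq
    rw [my_ncard_prod (finite_comp A _ _ _) (finite_comp A _ _ _)]
    rfl
  · intro q hq
    exact (finite_comp A _ _ _).prod (finite_comp A _ _ _)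
  · intro q hq q' hq' hne
    rw [Set.disjoint_left]
    rintro ⟨ρ, β⟩ h1 h2
    rw [Set.mem_prod] at h1 h2
    simp only [Set.mem_setOf_eq] at h1 h2
    apply hne
    ext
    · rw [← h1.1.1.2.1, ← h2.1.1.2.1]
    · rw [← h1.2.1.2.1, ← h2.2.1.2.1]
    · rw [← h1.1.1.2.2, ← h2.1.1.2.2]
    · rw [← h1.2.1.2.2, ← h2.2.1.2.2]

end Main

section Series
open MvPowerSeries Finset

lemma keyd (d : Fin 3 →₀ ℕ) :
    d = Finsupp.single 0 (d 0) + Finsupp.single 1 (d 1) + Finsupp.single 2 (d 2) := by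
  ext i
  fin_cases i <;> simp [Finsupp.single_apply]

lemma le_single2 (d : Fin 3 →₀ ℕ) : Finsupp.single 2 1 ≤ d ↔ 1 ≤ d 2 := by
  rw [Finsupp.le_def]
  constructor
  · intro h
    have := h 2
    simpa using this
  · intro h i
    fin_cases i <;> simp [Finsupp.single_apply] <;> omega

lemma le_single01 (d : Fin 3 →₀ ℕ) (a : ℕ) :
    Finsupp.single 1 1 + Finsupp.single 0 a ≤ d ↔ a ≤ d 0 ∧ 1 ≤ d 1 := by
  rw [Finsupp.le_def]
  constructor
  · intro h
    have h0 := h 0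
    have h1 := h 1
    simp [Finsupp.single_apply] at h0 h1
    exact ⟨h0, h1⟩
  · intro h i
    fin_cases i <;> simp [Finsupp.single_apply] <;> omega

open Finset in
open MvPowerSeries in
theorem stmt15 {α : Type*} [PartialOrder α] {ℓ : ℕ} (hℓ : 0 < ℓ) (p : Fin ℓ → α)
    (A : Finset ℕ) (hA : A.Nonempty) (hpos : ∀ a ∈ A, 0 < a)
    (G C : MvPowerSeries (Fin 3) ℚ)
    (hG : ∀ n m r : ℕ,
      (MvPowerSeries.coeff
          (Finsupp.single 0 n + Finsupp.single 1 m + Finsupp.single 2 r)) G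
        = (Set.ncard {σ : List ℕ | IsCompOf A n m σ ∧ nlap p σ = r} : ℚ))
    (hC : ∀ n m r : ℕ,
      (MvPowerSeries.coeff
          (Finsupp.single 0 n + Finsupp.single 1 m + Finsupp.single 2 r)) C
        = if r = 0
            then (Set.ncard {σ : List ℕ | IsCompOf A n m σ ∧ AvoidsPat p σ} : ℚ)
            else 0) :
    G * (1 - (X 2 : MvPowerSeries (Fin 3) ℚ) *
          (((X 1 : MvPowerSeries (Fin 3) ℚ) * (∑ a ∈ A, (X 0) ^ a) - 1) * C + 1))
      = C := by
  classical
  have hGc : ∀ d : Fin 3 →₀ ℕ, coeff d G = (gN p A (d 0) (d 1) (d 2) : ℚ) := by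
    intro d
    have := hG (d 0) (d 1) (d 2)
    rw [← keyd d] at this
    exact this
  have hCc : ∀ d : Fin 3 →₀ ℕ,
      coeff d C = if d 2 = 0 then (cN p A (d 0) (d 1) : ℚ) else 0 := by
    intro d
    have := hC (d 0) (d 1) (d 2)
    rw [← keyd d] at this
    exact this
  set B : MvPowerSeries (Fin 3) ℚ :=
    ((X 1 : MvPowerSeries (Fin 3) ℚ) * (∑ a ∈ A, (X 0) ^ a) - 1) * C + 1 with hB
  -- coefficient of B
  have hBc : ∀ d : Fin 3 →₀ ℕ,
      coeff d B = if d 2 = 0 then (bN p A (d 0) (d 1) : ℚ) else 0 := by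
    intro d
    have hexp : B = ((∑ a ∈ A, (X 1 * (X 0) ^ a) * C) - C) + 1 := by
      rw [hB, Finset.mul_sum, sub_mul, one_mul, Finset.sum_mul]
    rw [hexp, map_add, map_sub, map_sum, MvPowerSeries.coeff_one, hCc]
    have hterm : ∀ a ∈ A, coeff d ((X 1 * (X 0) ^ a) * C)
        = if a ≤ d 0 ∧ 1 ≤ d 1 then
            (if d 2 = 0 then (cN p A (d 0 - a) (d 1 - 1) : ℚ) else 0) else 0 := by
      intro a _
      have hmono : (X 1 : MvPowerSeries (Fin 3) ℚ) * (X 0) ^ a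
          = monomial (Finsupp.single 1 1 + Finsupp.single 0 a) 1 := by
        rw [X_pow_eq, X, monomial_mul_monomial, one_mul]
      have h2' : (d - (Finsupp.single 1 1 + Finsupp.single 0 a) : Fin 3 →₀ ℕ) 2 = d 2 := by
        rw [Finsupp.tsub_apply]
        simp [Finsupp.single_apply]
      have h0' : (d - (Finsupp.single 1 1 + Finsupp.single 0 a) : Fin 3 →₀ ℕ) 0 = d 0 - a := by
        rw [Finsupp.tsub_apply]
        simp [Finsupp.single_apply]
      have h1' : (d - (Finsupp.single 1 1 + Finsupp.single 0 a) : Fin 3 →₀ ℕ) 1 = d 1 - 1 := by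
        rw [Finsupp.tsub_apply]
        simp [Finsupp.single_apply]
      rw [hmono, coeff_monomial_mul]
      by_cases h : a ≤ d 0 ∧ 1 ≤ d 1
      · rw [if_pos ((le_single01 d a).2 h), one_mul, hCc, h0', h1', h2', if_pos h]
      · rw [if_neg (fun hc => h ((le_single01 d a).1 hc)), if_neg h]
    rw [Finset.sum_congr rfl hterm]
    have hd0 : (d = 0) ↔ (d 0 = 0 ∧ d 1 = 0 ∧ d 2 = 0) := by
      constructor
      · rintro rfl; simp
      · rintro ⟨h0, h1, h2⟩
        ext i
        fin_cases i <;> simp [h0, h1, h2]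
    by_cases h2 : d 2 = 0
    · have := block_count p A hℓ (d 0) (d 1)
      have hcast : (bN p A (d 0) (d 1) : ℚ) + (cN p A (d 0) (d 1) : ℚ)
          = (∑ a ∈ A, if a ≤ d 0 ∧ 1 ≤ d 1 then (cN p A (d 0 - a) (d 1 - 1) : ℚ) else 0)
            + (if d 0 = 0 ∧ d 1 = 0 then 1 else 0) := by
        exact_mod_cast congrArg (fun x : ℕ => (x : ℚ)) this
      simp only [hd0, h2, if_true, and_true, eq_self_iff_true]
      linarith [hcast]
    · simp only [hd0, h2, if_false, and_false]
      simp
  -- final coefficientwise computation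
  ext d
  have hring : G * (1 - (X 2 : MvPowerSeries (Fin 3) ℚ) * B) = G - (G * B) * (X 2) := by
    ring
  rw [hring, map_sub, hGc]
  have hX2 : (X 2 : MvPowerSeries (Fin 3) ℚ) = monomial (Finsupp.single 2 1) 1 := rfl
  rw [hX2, coeff_mul_monomial]
  by_cases h2 : d 2 = 0
  · rw [if_neg (fun hc => by have := (le_single2 d).1 hc; omega), hCc, if_pos h2, sub_zero,
      h2, gN_zero p A hℓ]
  · rw [if_pos ((le_single2 d).2 (by omega)), hCc, if_neg h2, mul_one]
    have hd'0 : (d - Finsupp.single 2 1 : Fin 3 →₀ ℕ) 0 = d 0 := by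
      rw [Finsupp.tsub_apply]; simp [Finsupp.single_apply]
    have hd'1 : (d - Finsupp.single 2 1 : Fin 3 →₀ ℕ) 1 = d 1 := by
      rw [Finsupp.tsub_apply]; simp [Finsupp.single_apply]
    have hd'2 : (d - Finsupp.single 2 1 : Fin 3 →₀ ℕ) 2 = d 2 - 1 := by
      rw [Finsupp.tsub_apply]; simp [Finsupp.single_apply]
    rw [coeff_mul (d - Finsupp.single 2 1) G B]
    have hsum : ∑ q ∈ antidiagonal (d - Finsupp.single 2 1),
          coeff q.1 G * coeff q.2 B
        = ∑ q ∈ (antidiagonal (d 0) ×ˢ (antidiagonal (d 1) ×ˢ antidiagonal (d 2 - 1))),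
            (gN p A q.1.1 q.2.1.1 q.2.2.1 : ℚ)
              * (if q.2.2.2 = 0 then (bN p A q.1.2 q.2.1.2 : ℚ) else 0) := by
      apply Finset.sum_nbij'
        (i := fun q : (Fin 3 →₀ ℕ) × (Fin 3 →₀ ℕ) =>
          ((q.1 0, q.2 0), ((q.1 1, q.2 1), (q.1 2, q.2 2))))
        (j := fun q : (ℕ × ℕ) × ((ℕ × ℕ) × (ℕ × ℕ)) =>
          (Finsupp.single 0 q.1.1 + Finsupp.single 1 q.2.1.1 + Finsupp.single 2 q.2.2.1,
           Finsupp.single 0 q.1.2 + Finsupp.single 1 q.2.1.2 + Finsupp.single 2 q.2.2.2))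
      · intro q hq
        rw [Finset.HasAntidiagonal.mem_antidiagonal] at hq
        have h0 := congrArg (fun f : Fin 3 →₀ ℕ => f 0) hq
        have h1 := congrArg (fun f : Fin 3 →₀ ℕ => f 1) hq
        have h22 := congrArg (fun f : Fin 3 →₀ ℕ => f 2) hq
        simp only [Finsupp.add_apply] at h0 h1 h22
        rw [hd'0] at h0
        rw [hd'1] at h1
        rw [hd'2] at h22
        simp only [Finset.mem_product, Finset.HasAntidiagonal.mem_antidiagonal]
        exact ⟨h0, h1, h22⟩
      · intro q hq
        simp only [Finset.mem_product, Finset.HasAntidiagonal.mem_antidiagonal] at hq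
        rw [Finset.HasAntidiagonal.mem_antidiagonal]
        have hdd : (d - Finsupp.single 2 1 : Fin 3 →₀ ℕ)
            = Finsupp.single 0 (d 0) + Finsupp.single 1 (d 1)
              + Finsupp.single 2 (d 2 - 1) := by
          rw [keyd (d - Finsupp.single 2 1 : Fin 3 →₀ ℕ), hd'0, hd'1, hd'2]
        rw [hdd, ← hq.1, ← hq.2.1, ← hq.2.2, Finsupp.single_add, Finsupp.single_add,
          Finsupp.single_add]
        simp only [add_assoc, add_left_comm, add_comm]
      · intro q hq
        have e1 : (Finsupp.single 0 (q.1 0) + Finsupp.single 1 (q.1 1)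
            + Finsupp.single 2 (q.1 2) : Fin 3 →₀ ℕ) = q.1 := (keyd q.1).symm
        have e2 : (Finsupp.single 0 (q.2 0) + Finsupp.single 1 (q.2 1)
            + Finsupp.single 2 (q.2 2) : Fin 3 →₀ ℕ) = q.2 := (keyd q.2).symm
        exact Prod.ext e1 e2
      · rintro ⟨⟨a, b⟩, ⟨c, e⟩, ⟨s, t⟩⟩ -
        simp [Finsupp.single_apply]
      · intro q hq
        rw [hGc, hBc]
    rw [hsum, Finset.sum_product]
    have hinner : ∀ q1 ∈ antidiagonal (d 0),
        (∑ q2 ∈ antidiagonal (d 1) ×ˢ antidiagonal (d 2 - 1),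
          (gN p A q1.1 q2.1.1 q2.2.1 : ℚ)
            * (if q2.2.2 = 0 then (bN p A q1.2 q2.1.2 : ℚ) else 0))
        = ∑ q2 ∈ antidiagonal (d 1),
            (gN p A q1.1 q2.1 (d 2 - 1) : ℚ) * (bN p A q1.2 q2.2 : ℚ) := by
      intro q1 _
      rw [Finset.sum_product]
      apply Finset.sum_congr rfl
      intro q2 _
      rw [Finset.sum_eq_single ((d 2 - 1, 0) : ℕ × ℕ)]
      · simp
      · rintro ⟨s, t⟩ hst hne
        rw [Finset.HasAntidiagonal.mem_antidiagonal] at hst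
        by_cases ht : t = 0
        · exfalso
          apply hne
          subst ht
          simp only [add_zero] at hst
          rw [hst]
        · simp [ht]
      · intro hnotmem
        exfalso
        apply hnotmem
        rw [Finset.HasAntidiagonal.mem_antidiagonal]
        omega
    rw [Finset.sum_congr rfl hinner]
    have hmain := main_count p A hℓ (d 0) (d 1) (d 2 - 1)
    have hd2 : d 2 - 1 + 1 = d 2 := by omega
    rw [hd2, Finset.sum_product] at hmain
    have hmainQ : (gN p A (d 0) (d 1) (d 2) : ℚ)
        = ∑ q1 ∈ antidiagonal (d 0), ∑ q2 ∈ antidiagonal (d 1),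
            (gN p A q1.1 q2.1 (d 2 - 1) : ℚ) * (bN p A q1.2 q2.2 : ℚ) := by
      rw [hmain]
      push_cast
      rfl
    rw [hmainQ]
    exact sub_self _
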